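/- A subgroup M of the Eisenstein-type lattice ℤ[ε], where ε = exp(iπ/3), satisfies ε·M = M if and only if M = e·ℤ[ε] for some e ∈ ℤ[ε]. -/

import Mathlib

open Complex in
/-- `ε = exp(iπ/3)`. -/
noncomputable def eps : ℂ := Complex.exp (Real.pi * Complex.I / 3)

lemma eps_eq : eps = Complex.ofReal (1/2) + Complex.ofReal (Real.sqrt 3 / 2) * Complex.I := by
  have h : (Real.pi : ℂ) * Complex.I / 3 = (Real.pi/3 : ℝ) * Complex.I := by push_cast; ring
  rw [eps, h, Complex.exp_mul_I]
  rw [← Complex.ofReal_cos, ← Complex.ofReal_sin]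
  rw [Real.cos_pi_div_three, Real.sin_pi_div_three]

lemma eps_re : eps.re = 1/2 := by rw [eps_eq]; simp
lemma eps_im : eps.im = Real.sqrt 3 / 2 := by rw [eps_eq]; simp

lemma eps_sq : eps^2 = eps - 1 := by
  have h : Real.sqrt 3 ^ 2 = 3 := Real.sq_sqrt (by norm_num)
  have h3 : ((Real.sqrt 3 : ℝ) : ℂ)^2 = 3 := by exact_mod_cast h
  rw [eps_eq]
  push_cast
  linear_combination ((Real.sqrt 3:ℂ)^2/4) * Complex.I_sq + (-1/4 : ℂ) * h3

lemma normSq_smul (s t : ℝ) : Complex.normSq ((s:ℂ) + (t:ℂ)*eps) = s^2 + s*t + t^2 := by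
  have h : Real.sqrt 3 ^ 2 = 3 := Real.sq_sqrt (by norm_num)
  rw [Complex.normSq_apply]
  simp [Complex.add_re, Complex.add_im, Complex.mul_re, Complex.mul_im, eps_re, eps_im]
  nlinarith [h]

/-- The lattice `ℤ[ε] = {p + qε : p, q ∈ ℤ}` as an additive subgroup of `ℂ`. -/
noncomputable def Zeps : AddSubgroup ℂ := AddSubgroup.closure {1, eps}

lemma mem_Zeps_iff {z : ℂ} : z ∈ Zeps ↔ ∃ p q : ℤ, z = (p:ℂ) + (q:ℂ) * eps := by
  constructor
  · intro hz
    induction hz using AddSubgroup.closure_induction with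
    | mem x hx =>
      rcases hx with h | h
      · exact ⟨1, 0, by simp [h]⟩
      · exact ⟨0, 1, by simp [Set.eq_of_mem_singleton h]⟩
    | zero => exact ⟨0, 0, by simp⟩
    | add x y hx hy ihx ihy =>
      obtain ⟨p, q, rfl⟩ := ihx
      obtain ⟨r, s, rfl⟩ := ihy
      exact ⟨p + r, q + s, by push_cast; ring⟩
    | neg x hx ih =>
      obtain ⟨p, q, rfl⟩ := ih
      exact ⟨-p, -q, by push_cast; ring⟩
  · rintro ⟨p, q, rfl⟩
    have h1 : (1:ℂ) ∈ Zeps := AddSubgroup.subset_closure (by simp)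
    have h2 : eps ∈ Zeps := AddSubgroup.subset_closure (by simp)
    have := AddSubgroup.add_mem Zeps (AddSubgroup.zsmul_mem Zeps h1 p) (AddSubgroup.zsmul_mem Zeps h2 q)
    simpa [zsmul_eq_mul] using this

lemma one_mem_Zeps : (1:ℂ) ∈ Zeps := AddSubgroup.subset_closure (by simp)
lemma eps_mem_Zeps : eps ∈ Zeps := AddSubgroup.subset_closure (by simp)

lemma Zeps_mul_mem {z w : ℂ} (hz : z ∈ Zeps) (hw : w ∈ Zeps) : z * w ∈ Zeps := by
  rw [mem_Zeps_iff] at *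
  obtain ⟨p, q, rfl⟩ := hz
  obtain ⟨r, s, rfl⟩ := hw
  exact ⟨p*r - q*s, p*s + q*r + q*s, by push_cast; linear_combination (q*s : ℂ) * eps_sq⟩

lemma round_lemma (w : ℂ) : ∃ q ∈ Zeps, Complex.normSq (w - q) < 1 := by
  have h3 : Real.sqrt 3 ^ 2 = 3 := Real.sq_sqrt (by norm_num)
  have h3pos : (0:ℝ) < Real.sqrt 3 := Real.sqrt_pos.mpr (by norm_num)
  set b : ℝ := 2 * w.im / Real.sqrt 3 with hb
  set a : ℝ := w.re - b / 2 with ha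
  have hw : w = (a:ℂ) + (b:ℂ) * eps := by
    apply Complex.ext
    · simp [Complex.add_re, Complex.mul_re, eps_re, eps_im, ha]
      ring
    · simp only [Complex.add_im, Complex.mul_im, eps_re, eps_im, Complex.ofReal_re,
        Complex.ofReal_im]
      field_simp [hb]
      rw [hb, div_mul_cancel₀ _ h3pos.ne']; ring
  refine ⟨(round a : ℤ) + (round b : ℤ) * eps, mem_Zeps_iff.mpr ⟨round a, round b, rfl⟩, ?_⟩
  have key : w - ((round a : ℤ) + (round b : ℤ) * eps) = ((a - round a : ℝ) : ℂ) + ((b - round b : ℝ):ℂ) * eps := by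
    rw [hw]; push_cast; ring
  rw [key, normSq_smul]
  nlinarith [abs_sub_round a, abs_sub_round b,
    abs_nonneg (a - (round a : ℤ)), abs_nonneg (b - (round b : ℤ)),
    sq_abs (a - (round a : ℤ)), sq_abs (b - (round b : ℤ)),
    abs_mul (a - ((round a : ℤ):ℝ)) (b - ((round b : ℤ):ℝ)),
    le_abs_self ((a - ((round a : ℤ):ℝ)) * (b - ((round b : ℤ):ℝ)))]

lemma normSq_nat {z : ℂ} (hz : z ∈ Zeps) : ∃ n : ℕ, Complex.normSq z = (n:ℝ) ∧ (z ≠ 0 → 1 ≤ n) := by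
  obtain ⟨p, q, rfl⟩ := mem_Zeps_iff.mp hz
  have heq : Complex.normSq ((p:ℂ) + (q:ℂ)*eps) = ((p^2 + p*q + q^2 : ℤ) : ℝ) := by
    have := normSq_smul (p:ℝ) (q:ℝ)
    push_cast at this ⊢
    convert this using 2
  have hnn : (0:ℤ) ≤ p^2 + p*q + q^2 := by
    have := Complex.normSq_nonneg ((p:ℂ) + (q:ℂ)*eps)
    rw [heq] at this; exact_mod_cast this
  refine ⟨(p^2 + p*q + q^2).toNat, by rw [heq]; exact_mod_cast (Int.toNat_of_nonneg hnn).symm, ?_⟩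
  intro hz0
  have hne : Complex.normSq ((p:ℂ) + (q:ℂ)*eps) ≠ 0 := by
    simpa [Complex.normSq_eq_zero] using hz0
  rw [heq] at hne
  have : p^2 + p*q + q^2 ≠ 0 := by exact_mod_cast hne
  omega

lemma eps_mul_Zeps {z : ℂ} (hz : z ∈ Zeps) : ∃ w ∈ Zeps, z = eps * w := by
  refine ⟨(1 - eps) * z, Zeps_mul_mem (AddSubgroup.sub_mem _ one_mem_Zeps eps_mem_Zeps) hz, ?_⟩
  linear_combination z * eps_sq

/-- An additive subgroup `M` of `ℤ[ε]` satisfies `ε·M = M` iff `M = e·ℤ[ε]`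
for some `e ∈ ℤ[ε]`. -/
theorem eps_invariant_iff_principal (M : AddSubgroup ℂ) (hM : M ≤ Zeps) :
    AddSubgroup.map (AddMonoidHom.mulLeft eps) M = M ↔
      ∃ e ∈ Zeps, (M : Set ℂ) = (fun z => e * z) '' (Zeps : Set ℂ) := by
  constructor
  · intro hMap
    -- M is closed under multiplication by elements of Zeps
    have hepsM : ∀ m ∈ M, eps * m ∈ M := by
      intro m hm
      rw [← hMap]
      exact ⟨m, hm, rfl⟩
    have hclosed : ∀ q ∈ Zeps, ∀ m ∈ M, q * m ∈ M := by
      intro q hq m hm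
      obtain ⟨p, r, rfl⟩ := mem_Zeps_iff.mp hq
      have : ((p:ℂ) + (r:ℂ) * eps) * m = p • m + r • (eps * m) := by
        simp [zsmul_eq_mul]; ring
      rw [this]
      exact AddSubgroup.add_mem _ (AddSubgroup.zsmul_mem _ hm p)
        (AddSubgroup.zsmul_mem _ (hepsM m hm) r)
    by_cases hbot : ∀ m ∈ M, m = (0:ℂ)
    · refine ⟨0, Zeps.zero_mem, ?_⟩
      ext x
      simp only [Set.mem_image, SetLike.mem_coe]
      constructor
      · intro hx; exact ⟨0, Zeps.zero_mem, by simp [hbot x hx]⟩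
      · rintro ⟨z, _, rfl⟩; simpa using M.zero_mem
    · push_neg at hbot
      obtain ⟨m₀, hm₀M, hm₀⟩ := hbot
      -- minimal norm element
      set S : Set ℕ := {n | ∃ m ∈ M, m ≠ 0 ∧ Complex.normSq m = (n:ℝ)} with hS
      have hSne : S.Nonempty := by
        obtain ⟨n, hn, _⟩ := normSq_nat (hM hm₀M)
        exact ⟨n, m₀, hm₀M, hm₀, hn⟩
      obtain ⟨e, heM, he0, heN⟩ := Nat.sInf_mem hSne
      have hemin : ∀ m ∈ M, m ≠ 0 → Complex.normSq e ≤ Complex.normSq m := by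
        intro m hm hm0
        obtain ⟨n, hn, _⟩ := normSq_nat (hM hm)
        have : sInf S ≤ n := Nat.sInf_le ⟨m, hm, hm0, hn⟩
        rw [heN, hn]
        exact_mod_cast this
      refine ⟨e, hM heM, ?_⟩
      ext x
      simp only [Set.mem_image, SetLike.mem_coe]
      constructor
      · intro hx
        obtain ⟨q, hq, hq1⟩ := round_lemma (x / e)
        have hx' : x - q * e ∈ M := AddSubgroup.sub_mem _ hx (hclosed q hq e heM)
        have hfac : x - q * e = e * (x / e - q) := by
          field_simp
        have hlt : Complex.normSq (x - q * e) < Complex.normSq e := by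
          rw [hfac, Complex.normSq_mul]
          have hepos : 0 < Complex.normSq e := Complex.normSq_pos.mpr he0
          calc Complex.normSq e * Complex.normSq (x / e - q)
              < Complex.normSq e * 1 := by exact mul_lt_mul_of_pos_left hq1 hepos
          _ = Complex.normSq e := mul_one _
        have hzero : x - q * e = 0 := by
          by_contra h0
          exact absurd hlt (not_lt.mpr (hemin _ hx' h0))
        refine ⟨q, hq, ?_⟩
        have : x = q * e := by linear_combination hzero
        rw [this]; ring
      · rintro ⟨z, hz, rfl⟩
        simpa [mul_comm] using hclosed z hz e heM
  · rintro ⟨e, heZ, hMeq⟩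
    ext x
    simp only [AddSubgroup.mem_map, AddMonoidHom.coe_mulLeft]
    constructor
    · rintro ⟨m, hm, rfl⟩
      have hm' : m ∈ (M : Set ℂ) := hm
      rw [hMeq] at hm'
      obtain ⟨z, hz, rfl⟩ := hm'
      show eps * (e * z) ∈ (M : Set ℂ)
      rw [hMeq]
      exact ⟨eps * z, Zeps_mul_mem eps_mem_Zeps hz, by ring⟩
    · intro hx
      have hx' : x ∈ (M : Set ℂ) := hx
      rw [hMeq] at hx'
      obtain ⟨z, hz, rfl⟩ := hx'
      obtain ⟨w, hw, hzw⟩ := eps_mul_Zeps hz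
      refine ⟨e * w, ?_, by show eps * (e * w) = e * z; rw [hzw]; ring⟩
      have : e * w ∈ (M : Set ℂ) := by rw [hMeq]; exact ⟨w, hw, rfl⟩
      exact this
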